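/- Combining both directions: for char F = p > 0 and r \u2264 min{p^m, s} with p^{m-1} < r \u2264 p^m, the Jordan partition \u03bb(r,s,p) is the uniform partition (s, \u2026, s) if and only if s \u2261 0 (mod p^m). -/
import Mathlib


open Matrix Kronecker

/-- The `k × k` upper-triangular Jordan block with eigenvalue `1`. -/
def jordanBlock (F : Type*) [Zero F] [One F] (k : ℕ) : Matrix (Fin k) (Fin k) F :=
  Matrix.of fun i j => if j = i then 1 else if (j : ℕ) = (i : ℕ) + 1 then 1 else 0

/-- `lam : Fin r → ℕ` is the Jordan partition of the square matrix `M`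
(with eigenvalue 1), characterized by: `lam` is weakly decreasing with positive
parts, and for every `k` the rank of `(M - 1)^k` equals `∑ i, max (lam i - k) 0`.
Over a field this holds iff `M` is similar to the direct sum of the unipotent
Jordan blocks `J_{lam i}`. -/
def IsJordanSeq {F : Type*} [CommRing F] {n : Type*} [Fintype n] [DecidableEq n]
    {r : ℕ} (M : Matrix n n F) (lam : Fin r → ℕ) : Prop :=
  Antitone lam ∧ (∀ i, 0 < lam i) ∧
    ∀ k : ℕ, ((M - 1) ^ k).rank = ∑ i, (lam i - k)

namespace Stmt11Aux

open Finset Module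

variable {F : Type*} [Field F]

/-- The nilpotent shift matrix. -/
def Nm (F : Type*) [Zero F] [One F] (k : ℕ) : Matrix (Fin k) (Fin k) F :=
  Matrix.of fun i j => if (j : ℕ) = (i : ℕ) + 1 then 1 else 0

lemma jordan_eq_one_add (k : ℕ) : jordanBlock F k = 1 + Nm F k := by
  ext i j
  by_cases h : j = i
  · subst h
    simp [jordanBlock, Nm, Matrix.one_apply]
  · have h' : i ≠ j := Ne.symm h
    simp [jordanBlock, Nm, Matrix.one_apply, h, h']

lemma Nm_pow_apply {k : ℕ} (e : ℕ) (i j : Fin k) :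
    ((Nm F k) ^ e) i j = if (j : ℕ) = (i : ℕ) + e then 1 else 0 := by
  induction e generalizing i j with
  | zero =>
    rw [pow_zero, Matrix.one_apply]
    simp [Fin.ext_iff, eq_comm]
  | succ e ih =>
    rw [pow_succ, Matrix.mul_apply]
    by_cases h : (j : ℕ) = (i : ℕ) + (e + 1)
    · have hje : (i : ℕ) + e < k := by have := j.2; omega
      rw [Finset.sum_eq_single (⟨(i : ℕ) + e, hje⟩ : Fin k)]
      · rw [ih, if_pos h, if_pos rfl]
        simp [Nm]
        omega
      · intro c _ hc
        rw [ih]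
        by_cases hc2 : (c : ℕ) = (i : ℕ) + e
        · exact absurd (Fin.ext hc2) hc
        · rw [if_neg hc2, zero_mul]
      · intro habs; exact absurd (Finset.mem_univ _) habs
    · rw [if_neg h]
      apply Finset.sum_eq_zero
      intro c _
      rw [ih]
      by_cases hc2 : (c : ℕ) = (i : ℕ) + e
      · rw [if_pos hc2, one_mul]
        simp only [Nm, Matrix.of_apply]
        rw [if_neg (by omega)]
      · rw [if_neg hc2, zero_mul]

lemma Nm_pow_eq_zero {k e : ℕ} (h : k ≤ e) : (Nm F k) ^ e = 0 := by
  ext i j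
  rw [Nm_pow_apply, Matrix.zero_apply, if_neg (by have := j.2; omega)]

lemma kron_pow {a b : ℕ} (A : Matrix (Fin a) (Fin a) F) (B : Matrix (Fin b) (Fin b) F) :
    ∀ n : ℕ, (A ⊗ₖ B) ^ n = (A ^ n) ⊗ₖ (B ^ n)
  | 0 => by rw [pow_zero, pow_zero, pow_zero, one_kronecker_one]
  | n + 1 => by
      rw [pow_succ, pow_succ, pow_succ, kron_pow A B n, ← mul_kronecker_mul]

lemma commNJ (k : ℕ) : Commute (Nm F k) (jordanBlock F k) := by
  rw [jordan_eq_one_add]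
  exact Commute.add_right (Commute.one_right _) (Commute.refl _)

lemma jordan_pow_zero_zero {k : ℕ} (hk : 0 < k) (a : ℕ) :
    ((jordanBlock F k) ^ a) ⟨0, hk⟩ ⟨0, hk⟩ = 1 := by
  induction a with
  | zero => simp [Matrix.one_apply]
  | succ a ih =>
    rw [pow_succ, Matrix.mul_apply]
    rw [Finset.sum_eq_single (⟨0, hk⟩ : Fin k)]
    · rw [ih]
      simp [jordanBlock]
    · intro c _ hc
      have : ¬((⟨0, hk⟩ : Fin k) = c) := fun h => hc h.symm
      simp only [jordanBlock, Matrix.of_apply]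
      rw [if_neg this, if_neg (by omega), mul_zero]
    · intro habs; exact absurd (Finset.mem_univ _) habs

/-- Sylvester's rank inequality. -/
lemma rank_mul_add_card {n : Type*} [Fintype n] [DecidableEq n] (A B : Matrix n n F) :
    A.rank + B.rank ≤ Fintype.card n + (A * B).rank := by
  classical
  set f := A.mulVecLin with hf
  set g := B.mulVecLin with hg
  set W := LinearMap.range g with hW
  set h : W →ₗ[F] (n → F) := f ∘ₗ W.subtype with hh
  have hrange : LinearMap.range h = LinearMap.range (A * B).mulVecLin := by
    rw [Matrix.mulVecLin_mul, hh, LinearMap.range_comp, LinearMap.range_comp,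
      Submodule.range_subtype]
  have h1 : finrank F (LinearMap.range h) + finrank F (LinearMap.ker h) = finrank F W :=
    h.finrank_range_add_finrank_ker
  have h2 : finrank F (LinearMap.range f) + finrank F (LinearMap.ker f) = Fintype.card n := by
    have := f.finrank_range_add_finrank_ker
    rwa [Module.finrank_pi] at this
  have h3 : finrank F (LinearMap.ker h) ≤ finrank F (LinearMap.ker f) := by
    calc finrank F (LinearMap.ker h)
        = finrank F ((LinearMap.ker h).map W.subtype) :=
          (Submodule.finrank_map_subtype_eq _ _).symm
      _ ≤ finrank F (LinearMap.ker f) := by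
          apply Submodule.finrank_mono
          rintro x ⟨y, hy, rfl⟩
          exact hy
  have hA : A.rank = finrank F (LinearMap.range f) := rfl
  have hB : B.rank = finrank F W := rfl
  have hAB : (A * B).rank = finrank F (LinearMap.range h) := by
    rw [Matrix.rank, hrange]
  omega

lemma rank_add_rank_le_card {n : Type*} [Fintype n] [DecidableEq n] {A B : Matrix n n F}
    (h : A * B = 0) : B.rank + A.rank ≤ Fintype.card n := by
  have hle : LinearMap.range B.mulVecLin ≤ LinearMap.ker A.mulVecLin := by
    rintro x ⟨v, rfl⟩
    show A.mulVec (B.mulVec v) = 0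
    rw [Matrix.mulVec_mulVec, h, Matrix.zero_mulVec]
  have h2 : finrank F (LinearMap.range A.mulVecLin) + finrank F (LinearMap.ker A.mulVecLin)
      = Fintype.card n := by
    have := A.mulVecLin.finrank_range_add_finrank_ker
    rwa [Module.finrank_pi] at this
  have h3 : B.rank ≤ finrank F (LinearMap.ker A.mulVecLin) := Submodule.finrank_mono hle
  have hA : A.rank = finrank F (LinearMap.range A.mulVecLin) := rfl
  omega

lemma eq_zero_of_rank_eq_zero {n : Type*} [Fintype n] [DecidableEq n] {A : Matrix n n F}
    (h : A.rank = 0) : A = 0 := by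
  have h0 : LinearMap.range A.mulVecLin = ⊥ := Submodule.finrank_eq_zero.mp h
  ext i j
  have : A.mulVec (Pi.single j 1) = 0 := by
    have : A.mulVecLin (Pi.single j 1) ∈ (⊥ : Submodule F (n → F)) := by
      rw [← h0]; exact LinearMap.mem_range_self _ _
    simpa using this
  have := congrFun this i
  simpa using this

/-- Lucas-type nondivisibility: if `p^l ≤ t < p^(l+1)` then `p ∤ C(t, p^l)`. -/
lemma lucas_aux {p : ℕ} (hp : p.Prime) :
    ∀ l t : ℕ, p ^ l ≤ t → t < p ^ (l + 1) → ¬ p ∣ Nat.choose t (p ^ l) := by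
  haveI := Fact.mk hp
  intro l
  induction l with
  | zero =>
    intro t h1 h2 hdvd
    rw [pow_zero] at h1
    rw [pow_one] at h2
    rw [pow_zero, Nat.choose_one_right] at hdvd
    have := Nat.le_of_dvd (by omega) hdvd
    omega
  | succ l ih =>
    intro t h1 h2 hdvd
    have hmod := Choose.choose_modEq_choose_mod_mul_choose_div_nat
      (n := t) (k := p ^ (l + 1)) (p := p)
    have e1 : p ^ (l + 1) % p = 0 := by
      rw [pow_succ]; exact Nat.mul_mod_left _ _
    have e2 : p ^ (l + 1) / p = p ^ l := by
      rw [pow_succ]; exact Nat.mul_div_cancel _ hp.pos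
    rw [e1, e2, Nat.choose_zero_right, one_mul] at hmod
    have h1' : p ^ l ≤ t / p := by
      rw [Nat.le_div_iff_mul_le hp.pos, ← pow_succ]
      exact h1
    have h2' : t / p < p ^ (l + 1) := by
      rw [Nat.div_lt_iff_lt_mul hp.pos, ← pow_succ]
      exact h2
    refine ih (t / p) h1' h2' ?_
    have : Nat.choose (t / p) (p ^ l) ≡ 0 [MOD p] :=
      hmod.symm.trans ((Nat.modEq_zero_iff_dvd).mpr hdvd)
    exact (Nat.modEq_zero_iff_dvd).mp this

/-- Lower bound for the rank of `J_r ⊗ J_s - 1`. -/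
lemma rank_X_ge (r s : ℕ) (hs : 0 < s) :
    r * (s - 1) ≤ (jordanBlock F r ⊗ₖ jordanBlock F s
      - (1 : Matrix (Fin r × Fin s) (Fin r × Fin s) F)).rank := by
  classical
  set X : Matrix (Fin r × Fin s) (Fin r × Fin s) F :=
    jordanBlock F r ⊗ₖ jordanBlock F s - 1 with hX
  have hXapp : ∀ (a b : Fin r) (c d : Fin s), X (a, c) (b, d) =
      jordanBlock F r a b * jordanBlock F s c d - (if a = b ∧ c = d then 1 else 0) := by
    intro a b c d
    rw [hX, Matrix.sub_apply, Matrix.kroneckerMap_apply, Matrix.one_apply]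
    congr 1
    simp [Prod.ext_iff]
  set f : Fin r × Fin (s - 1) → Fin r × Fin s :=
    fun q => (q.1, ⟨(q.2 : ℕ), by have := q.2.2; omega⟩) with hfdef
  set g : Fin r × Fin (s - 1) → Fin r × Fin s :=
    fun q => (q.1, ⟨(q.2 : ℕ) + 1, by have := q.2.2; omega⟩) with hgdef
  set Y : Matrix (Fin r × Fin (s - 1)) (Fin r × Fin (s - 1)) F := X.submatrix f g with hY
  have hbt : Y.BlockTriangular (fun q => ((q.1 : ℕ) : ℕ)) := by
    intro i j hij
    show X (f i) (g j) = 0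
    rw [hfdef, hgdef]
    dsimp only
    rw [hXapp]
    have hval : (j.1 : ℕ) < (i.1 : ℕ) := hij
    simp only [jordanBlock, Matrix.of_apply, Fin.ext_iff, Fin.mk.injEq]
    split_ifs <;> first | ring1 | (exfalso; omega)
  have hdiag : ∀ a, Y.toSquareBlock (fun q => ((q.1 : ℕ) : ℕ)) a = 1 := by
    intro a
    ext ⟨i, hi⟩ ⟨j, hj⟩
    show X (f i) (g j) = _
    have hfst : (i.1 : ℕ) = (j.1 : ℕ) := by
      have h1 : ((i.1 : ℕ)) = a := hi
      have h2 : ((j.1 : ℕ)) = a := hj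
      omega
    have hone : (1 : Matrix {q : Fin r × Fin (s-1) // ((q.1 : ℕ) : ℕ) = a}
        {q : Fin r × Fin (s-1) // ((q.1 : ℕ) : ℕ) = a} F) ⟨i, hi⟩ ⟨j, hj⟩
        = if (i.2 : ℕ) = (j.2 : ℕ) then 1 else 0 := by
      by_cases h : (i.2 : ℕ) = (j.2 : ℕ)
      · rw [if_pos h, show (⟨i, hi⟩ : {q : Fin r × Fin (s-1) // ((q.1 : ℕ) : ℕ) = a})
            = ⟨j, hj⟩ from Subtype.ext (Prod.ext (Fin.ext hfst) (Fin.ext h)),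
          Matrix.one_apply_eq]
      · rw [if_neg h, Matrix.one_apply_ne (by
          intro hcontra
          apply h
          have := congrArg (fun z => ((z : {q : Fin r × Fin (s-1) // ((q.1 : ℕ) : ℕ) = a}).1.2 : ℕ)) hcontra
          exact this)]
    rw [hone, hfdef, hgdef]
    dsimp only
    rw [hXapp]
    simp only [jordanBlock, Matrix.of_apply, Fin.ext_iff, Fin.mk.injEq]
    split_ifs <;> first | ring1 | (exfalso; omega)
  have hdet : Y.det = 1 := by
    rw [hbt.det]
    refine Finset.prod_eq_one fun a _ => ?_
    rw [hdiag a, Matrix.det_one]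
  have hYunit : IsUnit Y := by
    rw [Matrix.isUnit_iff_isUnit_det, hdet]
    exact isUnit_one
  have hYrank : Y.rank = r * (s - 1) := by
    rw [Matrix.rank_of_isUnit Y hYunit]
    simp
  set P : Matrix (Fin r × Fin (s - 1)) (Fin r × Fin s) F :=
    Matrix.of fun i j => if f i = j then 1 else 0 with hP
  set Q : Matrix (Fin r × Fin s) (Fin r × Fin (s - 1)) F :=
    Matrix.of fun j i => if g i = j then 1 else 0 with hQ
  have hPQ : P * (X * Q) = Y := by
    ext i j
    have hXQ : (X * Q) = Matrix.of fun c jj => X c (g jj) := by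
      ext c jj
      rw [Matrix.mul_apply]
      simp only [hQ, Matrix.of_apply, mul_ite, mul_one, mul_zero]
      rw [Finset.sum_ite_eq univ (g jj) (fun d => X c d)]
      simp
    rw [hXQ, Matrix.mul_apply]
    simp only [hP, Matrix.of_apply, ite_mul, one_mul, zero_mul]
    rw [Finset.sum_ite_eq univ (f i) (fun c => X c (g j))]
    simp [hY]
  calc r * (s - 1) = Y.rank := hYrank.symm
    _ = (P * (X * Q)).rank := by rw [hPQ]
    _ ≤ (X * Q).rank := Matrix.rank_mul_le_right _ _
    _ ≤ X.rank := Matrix.rank_mul_le_left _ _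

end Stmt11Aux

open Stmt11Aux

/-- For `p^{m-1} < r ≤ min{p^m, s}`, the Jordan partition of `J_r ⊗ J_s` is
the uniform partition `(s, …, s)` if and only if `p^m ∣ s`. -/
theorem stmt11 (F : Type*) [Field F] (p : ℕ) [CharP F p] (hp : p.Prime)
    (m r s : ℕ) (hm : p ^ (m - 1) < r) (hrpm : r ≤ p ^ m) (hrs : r ≤ s) :
    IsJordanSeq (jordanBlock F r ⊗ₖ jordanBlock F s) (fun _ : Fin r => s) ↔
      p ^ m ∣ s := by
  classical
  haveI := Fact.mk hp
  have hp1 : 1 < p := hp.one_lt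
  have hr0 : 0 < r := lt_of_le_of_lt (Nat.zero_le _) hm
  have hs0 : 0 < s := lt_of_lt_of_le hr0 hrs
  haveI : Nonempty (Fin r) := ⟨⟨0, hr0⟩⟩
  haveI : Nonempty (Fin s) := ⟨⟨0, hs0⟩⟩
  set X : Matrix (Fin r × Fin s) (Fin r × Fin s) F :=
    jordanBlock F r ⊗ₖ jordanBlock F s - 1 with hX
  have hcard : Fintype.card (Fin r × Fin s) = r * s := by simp
  have hNr : (Nm F r) ^ (p ^ m) = 0 := Nm_pow_eq_zero hrpm
  -- the Frobenius identity
  have hXpm : X ^ (p ^ m)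
      = (1 : Matrix (Fin r) (Fin r) F) ⊗ₖ ((Nm F s) ^ (p ^ m)) := by
    have hM : (jordanBlock F r ⊗ₖ jordanBlock F s) ^ (p ^ m)
        = (1 : Matrix (Fin r) (Fin r) F) ⊗ₖ
          ((1 : Matrix (Fin s) (Fin s) F) + (Nm F s) ^ (p ^ m)) := by
      have hJr : (jordanBlock F r) ^ (p ^ m) = 1 := by
        rw [jordan_eq_one_add, add_pow_char_pow_of_commute _ _ (Commute.one_left _), one_pow,
          hNr, add_zero]
      have hJs : (jordanBlock F s) ^ (p ^ m)
          = (1 : Matrix (Fin s) (Fin s) F) + (Nm F s) ^ (p ^ m) := by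
        rw [jordan_eq_one_add, add_pow_char_pow_of_commute _ _ (Commute.one_left _), one_pow]
      rw [kron_pow, hJr, hJs]
    rw [hX, sub_pow_char_pow_of_commute _ _ (Commute.one_right _), hM, one_pow,
      kronecker_add, one_kronecker_one]
    abel
  -- decomposition of X
  have hXdecomp : X = (Nm F r) ⊗ₖ (jordanBlock F s)
      + (1 : Matrix (Fin r) (Fin r) F) ⊗ₖ (Nm F s) := by
    rw [hX, jordan_eq_one_add r, jordan_eq_one_add s]
    simp only [add_kronecker, kronecker_add, one_kronecker_one]
    abel
  constructor
  · -- forward direction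
    rintro ⟨-, -, hrank⟩
    by_contra hndvd
    have hXs : X ^ s = 0 := by
      apply eq_zero_of_rank_eq_zero
      rw [hX, hrank s]
      simp
    set t := s % p ^ m with htdef
    have ht0 : t ≠ 0 := fun h => hndvd (Nat.dvd_iff_mod_eq_zero.mpr h)
    have hpm0 : 0 < p ^ m := pow_pos hp.pos m
    have htpm : t < p ^ m := Nat.mod_lt _ hpm0
    set l := Nat.log p t with hldef
    have hj0t : p ^ l ≤ t := Nat.pow_log_le_self p ht0
    have htl : t < p ^ (l + 1) := Nat.lt_pow_succ_log_self hp1 t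
    have hlm : l < m := by
      have h1 : p ^ l < p ^ m := lt_of_le_of_lt hj0t htpm
      exact (Nat.pow_lt_pow_iff_right hp1).mp h1
    have hj0r : p ^ l < r := by
      calc p ^ l ≤ p ^ (m - 1) := Nat.pow_le_pow_right hp.one_le (by omega)
        _ < r := hm
    have hchoose : ¬ p ∣ Nat.choose t (p ^ l) := lucas_aux hp l t hj0t htl
    set j0 : ℕ := p ^ l with hj0def
    have hj0pos : 0 < j0 := pow_pos hp.pos l
    set q := s / p ^ m with hqdef
    have hqt : p ^ m * q + t = s := Nat.div_add_mod s (p ^ m)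
    have hcomm : Commute ((Nm F r) ⊗ₖ (jordanBlock F s))
        ((1 : Matrix (Fin r) (Fin r) F) ⊗ₖ (Nm F s)) := by
      show _ * _ = _ * _
      rw [← mul_kronecker_mul, ← mul_kronecker_mul, one_mul, mul_one, (commNJ s).eq]
    -- expand X^s
    have hXsum : X ^ s = ∑ j ∈ Finset.range (t + 1),
        (Nat.choose t j) • (((Nm F r) ^ j) ⊗ₖ
          ((jordanBlock F s) ^ j * (Nm F s) ^ (p ^ m * q + (t - j)))) := by
      have e1 : X ^ s
          = ((1 : Matrix (Fin r) (Fin r) F) ⊗ₖ ((Nm F s) ^ (p ^ m * q))) * X ^ t := by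
        calc X ^ s = X ^ (p ^ m * q + t) := by rw [hqt]
          _ = (X ^ (p ^ m)) ^ q * X ^ t := by rw [pow_add, pow_mul]
          _ = ((1 : Matrix (Fin r) (Fin r) F) ⊗ₖ ((Nm F s) ^ (p ^ m))) ^ q * X ^ t := by
              rw [hXpm]
          _ = ((1 : Matrix (Fin r) (Fin r) F) ⊗ₖ ((Nm F s) ^ (p ^ m * q))) * X ^ t := by
              rw [kron_pow, one_pow, ← pow_mul]
      have e2 : X ^ t = ∑ j ∈ Finset.range (t + 1),
          ((Nm F r) ⊗ₖ (jordanBlock F s)) ^ j *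
            ((1 : Matrix (Fin r) (Fin r) F) ⊗ₖ (Nm F s)) ^ (t - j)
              * (Nat.choose t j : Matrix (Fin r × Fin s) (Fin r × Fin s) F) := by
        rw [hXdecomp]
        exact hcomm.add_pow t
      rw [e1, e2, Finset.mul_sum]
      refine Finset.sum_congr rfl fun j hj => ?_
      rw [kron_pow, kron_pow, one_pow]
      rw [show (((Nm F r) ^ j) ⊗ₖ ((jordanBlock F s) ^ j)) *
            ((1 : Matrix (Fin r) (Fin r) F) ⊗ₖ ((Nm F s) ^ (t - j)))
          = ((Nm F r) ^ j) ⊗ₖ ((jordanBlock F s) ^ j * (Nm F s) ^ (t - j)) by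
        rw [← mul_kronecker_mul, mul_one]]
      rw [← mul_assoc]
      rw [show ((1 : Matrix (Fin r) (Fin r) F) ⊗ₖ ((Nm F s) ^ (p ^ m * q))) *
            (((Nm F r) ^ j) ⊗ₖ ((jordanBlock F s) ^ j * (Nm F s) ^ (t - j)))
          = ((Nm F r) ^ j) ⊗ₖ ((jordanBlock F s) ^ j * (Nm F s) ^ (p ^ m * q + (t - j))) by
        rw [← mul_kronecker_mul, one_mul]
        rw [← mul_assoc, ((commNJ s).pow_pow (p ^ m * q) j).eq, mul_assoc, ← pow_add]]
      rw [← (Nat.cast_commute (Nat.choose t j)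
        (((Nm F r) ^ j) ⊗ₖ ((jordanBlock F s) ^ j * (Nm F s) ^ (p ^ m * q + (t - j))))).eq,
        ← nsmul_eq_mul]
    -- extract the distinguished entry
    have hkey : (X ^ s) (⟨0, hr0⟩, ⟨0, hs0⟩) (⟨j0, hj0r⟩, ⟨s - j0, by omega⟩)
        = (Nat.choose t j0 : F) := by
      rw [hXsum, Matrix.sum_apply]
      refine Eq.trans (Finset.sum_eq_single_of_mem j0
        (Finset.mem_range.mpr (by omega)) ?_) ?_
      · intro j _ hjne
        rw [Matrix.smul_apply, Matrix.kroneckerMap_apply]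
        have hfst : ((Nm F r) ^ j) ⟨0, hr0⟩ ⟨j0, hj0r⟩ = 0 := by
          rw [Nm_pow_apply, if_neg (by simp; omega)]
        rw [hfst, zero_mul, smul_zero]
      · rw [Matrix.smul_apply, Matrix.kroneckerMap_apply]
        have hfst : ((Nm F r) ^ j0) ⟨0, hr0⟩ ⟨j0, hj0r⟩ = 1 := by
          rw [Nm_pow_apply, if_pos (by simp)]
        have hsnd : ((jordanBlock F s) ^ j0 * (Nm F s) ^ (p ^ m * q + (t - j0)))
            ⟨0, hs0⟩ ⟨s - j0, by omega⟩ = 1 := by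
          rw [Matrix.mul_apply]
          rw [Finset.sum_eq_single (⟨0, hs0⟩ : Fin s)]
          · rw [jordan_pow_zero_zero, Nm_pow_apply, one_mul, if_pos (by simp; omega)]
          · intro b _ hb
            rw [Nm_pow_apply, if_neg (by
              simp only [Fin.val_mk]
              intro hcontra
              apply hb
              apply Fin.ext
              simp only [Fin.val_mk]
              omega), mul_zero]
          · intro habs; exact absurd (Finset.mem_univ _) habs
        rw [hfst, hsnd, mul_one, nsmul_eq_mul, mul_one]
    rw [hXs] at hkey
    simp only [Matrix.zero_apply] at hkey
    exact hchoose ((CharP.cast_eq_zero_iff F p _).mp hkey.symm)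
  · -- backward direction
    intro hdvd
    obtain ⟨c, hc⟩ := hdvd
    have hXs : X ^ s = 0 := by
      have e1 : X ^ s = (X ^ (p ^ m)) ^ c := by rw [← pow_mul, ← hc]
      rw [e1, hXpm, kron_pow, one_pow, ← pow_mul, ← hc,
        Nm_pow_eq_zero (le_refl s), kronecker_zero]
    refine ⟨antitone_const, fun _ => hs0, fun k => ?_⟩
    rw [← hX]
    have hsum : (∑ _i : Fin r, (s - k)) = r * (s - k) := by
      rw [Finset.sum_const, Finset.card_univ, Fintype.card_fin, smul_eq_mul]
    rw [hsum]
    have hXr : r * (s - 1) ≤ X.rank := by rw [hX]; exact rank_X_ge r s hs0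
    have hlow : ∀ k : ℕ, r * s ≤ (X ^ k).rank + k * r := by
      intro k
      induction k with
      | zero =>
        rw [pow_zero, Matrix.rank_one, hcard]
        omega
      | succ k ih =>
        have hsyl := rank_mul_add_card X (X ^ k)
        rw [← pow_succ'] at hsyl
        rw [hcard] at hsyl
        have he : r * (s - 1) + r = r * s := by
          cases s with
          | zero => omega
          | succ s' => rw [Nat.succ_sub_one]; ring
        have e6 : (k + 1) * r = k * r + r := by ring
        omega
    by_cases hks : k ≤ s
    · have hup : (X ^ k).rank + (X ^ (s - k)).rank ≤ r * s := by
        have h0 : (X ^ (s - k)) * (X ^ k) = 0 := by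
          rw [← pow_add, Nat.sub_add_cancel hks, hXs]
        have := rank_add_rank_le_card h0
        rwa [hcard] at this
      have h1 := hlow k
      have h2 := hlow (s - k)
      have e1 : r * (s - k) + r * k = r * s := by
        rw [← Nat.mul_add, Nat.sub_add_cancel hks]
      have e4 : k * r = r * k := Nat.mul_comm _ _
      have e5 : (s - k) * r = r * (s - k) := Nat.mul_comm _ _
      omega
    · have hzero : X ^ k = 0 := by
        have e1 : X ^ k = X ^ s * X ^ (k - s) := by
          rw [← pow_add, Nat.add_sub_cancel' (le_of_not_ge hks)]
        rw [e1, hXs, zero_mul]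
      rw [hzero, Matrix.rank_zero, Nat.sub_eq_zero_of_le (le_of_not_ge hks), Nat.mul_zero]
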